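/- arXiv:1811.09491 — 2 statements merged into one kernel-verified Lean document; each statement's English description precedes it below -/
import Mathlib

section
/- Let ℓ : ℝ → ℝ be differentiable with |ℓ'(z)| ≤ 1 for all z, let g : ℝ^d → ℝ be differentiable, let λ > 0, Δ ≥ 0, q > 0, and let D = ((x_1,y_1),…,(x_n,y_n)) and D' = ((x_1,y_1),…,(x_{n-1},y_{n-1}),(x'_n,y'_n)) be two datasets differing only in the n-th example, with ‖x_i‖ ≤ q, ‖x'_n‖ ≤ q, and y_i, y'_n ∈ {−1,1}. If a vector w̄ ∈ ℝ^d is a critical point (gradient zero) of both perturbed objectives F(·; D, b, Δ) and F(·; D', b', Δ) for noise vectors b, b' ∈ ℝ^d, then ‖b − b'‖ ≤ 2q, and in particular ‖b‖ − ‖b'‖ ≤ 2q. -/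
open Finset InnerProductSpace

/-- The perturbed objective
`F(w; D, b, Δ) = (1/n)·Σᵢ ℓ(yᵢ⟨w,xᵢ⟩) + (1/n)⟨b,w⟩ + (Δ/2)‖w‖² + λ·g(w)`. -/
noncomputable def perturbedObj {d n : ℕ} (ℓ : ℝ → ℝ)
    (x : Fin n → EuclideanSpace ℝ (Fin d)) (y : Fin n → ℝ)
    (g : EuclideanSpace ℝ (Fin d) → ℝ) (lam Δ : ℝ)
    (b : EuclideanSpace ℝ (Fin d)) (w : EuclideanSpace ℝ (Fin d)) : ℝ :=
  (1 / n) * ∑ i, ℓ (y i * (inner ℝ w (x i) : ℝ)) + (1 / n) * (inner ℝ b w : ℝ)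
    + (Δ / 2) * ‖w‖ ^ 2 + lam * g w

lemma perturbed_hasGradientAt {d n : ℕ} (ℓ ℓ' : ℝ → ℝ) (hdiff : ∀ z, HasDerivAt ℓ (ℓ' z) z)
    (x : Fin n → EuclideanSpace ℝ (Fin d)) (y : Fin n → ℝ)
    (g : EuclideanSpace ℝ (Fin d) → ℝ) (hg : Differentiable ℝ g)
    (lam Δ : ℝ) (b w : EuclideanSpace ℝ (Fin d)) :
    HasGradientAt (perturbedObj ℓ x y g lam Δ b)
      ((1 / n : ℝ) • ∑ i, (ℓ' (y i * (inner ℝ w (x i) : ℝ)) * y i) • x i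
        + (1 / n : ℝ) • b + Δ • w + lam • gradient g w) w := by
  rw [hasGradientAt_iff_hasFDerivAt]
  have hsum : HasFDerivAt (fun v : EuclideanSpace ℝ (Fin d) =>
      ∑ i, ℓ (y i * (inner ℝ v (x i) : ℝ)))
      (∑ i, (ℓ' (y i * (inner ℝ w (x i) : ℝ))) • innerSL ℝ (y i • x i)) w := by
    apply HasFDerivAt.fun_sum
    intro i _
    have h1 : HasFDerivAt (fun v : EuclideanSpace ℝ (Fin d) => y i * (inner ℝ v (x i) : ℝ))
        (innerSL ℝ (y i • x i)) w := by
      have := (innerSL ℝ (y i • x i)).hasFDerivAt (x := w)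
      convert this using 1
      funext v
      simp only [innerSL_apply_apply, real_inner_smul_left]
      rw [real_inner_comm]
    exact (hdiff _).comp_hasFDerivAt w h1
  have hb : HasFDerivAt (fun v : EuclideanSpace ℝ (Fin d) => (inner ℝ b v : ℝ))
      (innerSL ℝ b) w := (innerSL ℝ b).hasFDerivAt
  have hns : HasFDerivAt (fun v : EuclideanSpace ℝ (Fin d) => ‖v‖ ^ 2)
      (2 • innerSL ℝ w) w := (hasStrictFDerivAt_norm_sq w).hasFDerivAt
  have hgf : HasFDerivAt g (toDual ℝ _ (gradient g w)) w :=
    ((hg w).hasGradientAt).hasFDerivAt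
  have := (((hsum.const_mul (1/n : ℝ)).add (hb.const_mul (1/n : ℝ))).add
      (hns.const_mul (Δ/2))).add (hgf.const_mul lam)
  refine HasFDerivAt.congr_fderiv this ?_
  ext v
  simp only [inner_add_left, real_inner_smul_left, sum_inner, ContinuousLinearMap.add_apply,
    ContinuousLinearMap.coe_smul', Pi.smul_apply, ContinuousLinearMap.sum_apply,
    toDual_apply_apply, innerSL_apply_apply, smul_eq_mul]
  ring_nf

/-- If `wbar` is a critical point of the perturbed objectives for two datasets differing only in the
`n`-th example (with data norms bounded by `q` and labels in `{-1,1}`), then `‖b - b'‖ ≤ 2q`, and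
in particular `‖b‖ - ‖b'‖ ≤ 2q`. -/
theorem noise_diff_bound {d n : ℕ} (hn : 1 ≤ n)
    (ℓ ℓ' : ℝ → ℝ) (hdiff : ∀ z, HasDerivAt ℓ (ℓ' z) z) (hℓ' : ∀ z, |ℓ' z| ≤ 1)
    (g : EuclideanSpace ℝ (Fin d) → ℝ) (hg : Differentiable ℝ g)
    (lam Δ q : ℝ) (hlam : 0 < lam) (hΔ : 0 ≤ Δ) (hq : 0 < q)
    (x x' : Fin n → EuclideanSpace ℝ (Fin d)) (y y' : Fin n → ℝ)
    (i₀ : Fin n) (hi₀ : (i₀ : ℕ) = n - 1)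
    (hxx' : ∀ i, i ≠ i₀ → x i = x' i) (hyy' : ∀ i, i ≠ i₀ → y i = y' i)
    (hx : ∀ i, ‖x i‖ ≤ q) (hx' : ‖x' i₀‖ ≤ q)
    (hy : ∀ i, y i = 1 ∨ y i = -1) (hy' : y' i₀ = 1 ∨ y' i₀ = -1)
    (b b' wbar : EuclideanSpace ℝ (Fin d))
    (hcrit : gradient (perturbedObj ℓ x y g lam Δ b) wbar = 0)
    (hcrit' : gradient (perturbedObj ℓ x' y' g lam Δ b') wbar = 0) :
    ‖b - b'‖ ≤ 2 * q ∧ ‖b‖ - ‖b'‖ ≤ 2 * q := by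
  have hn0 : (1 / n : ℝ) ≠ 0 := by
    have : (0:ℝ) < n := by exact_mod_cast hn
    positivity
  set c : Fin n → ℝ := fun i => ℓ' (y i * (inner ℝ wbar (x i) : ℝ)) * y i with hc
  set c' : Fin n → ℝ := fun i => ℓ' (y' i * (inner ℝ wbar (x' i) : ℝ)) * y' i with hc'
  have h1 := (perturbed_hasGradientAt ℓ ℓ' hdiff x y g hg lam Δ b wbar).gradient
  have h2 := (perturbed_hasGradientAt ℓ ℓ' hdiff x' y' g hg lam Δ b' wbar).gradient
  rw [hcrit] at h1
  rw [hcrit'] at h2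
  have h3 : (1/n:ℝ) • (∑ i, c i • x i) + (1/n:ℝ) • b
      = (1/n:ℝ) • (∑ i, c' i • x' i) + (1/n:ℝ) • b' := by
    have h := h1.symm.trans h2
    exact add_right_cancel (add_right_cancel h)
  have h4 : (1/n:ℝ) • ((∑ i, c i • x i) + b) = (1/n:ℝ) • ((∑ i, c' i • x' i) + b') := by
    rw [smul_add, smul_add]; exact h3
  have h5 : (∑ i, c i • x i) + b = (∑ i, c' i • x' i) + b' :=
    smul_right_injective _ hn0 h4
  have hsum : ∑ i, (c i • x i - c' i • x' i) = c i₀ • x i₀ - c' i₀ • x' i₀ := by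
    refine Finset.sum_eq_single i₀ (fun i _ hne => ?_) (by simp)
    rw [hc, hc']
    simp only [hxx' i hne, hyy' i hne, sub_self]
  have hbb : b - b' = c' i₀ • x' i₀ - c i₀ • x i₀ := by
    have := h5
    have h6 : (∑ i, c i • x i) - (∑ i, c' i • x' i) = c i₀ • x i₀ - c' i₀ • x' i₀ := by
      rw [← Finset.sum_sub_distrib, hsum]
    have : b - b' = (∑ i, c' i • x' i) - (∑ i, c i • x i) := by
      have := h5
      abel_nf
      linear_combination (norm := abel_nf) this
    rw [this, ← neg_sub, h6, neg_sub]
  have habs : ∀ (s yv : ℝ), yv = 1 ∨ yv = -1 → |ℓ' s * yv| ≤ 1 := by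
    intro s yv hyv
    rcases hyv with h | h <;> simp [h, abs_mul] <;> exact hℓ' s
  have hnorm1 : ‖c' i₀ • x' i₀‖ ≤ q := by
    rw [norm_smul]
    calc ‖c' i₀‖ * ‖x' i₀‖ ≤ 1 * q := by
          apply mul_le_mul (habs _ _ hy') hx' (norm_nonneg _) zero_le_one
      _ = q := one_mul q
  have hnorm2 : ‖c i₀ • x i₀‖ ≤ q := by
    rw [norm_smul]
    calc ‖c i₀‖ * ‖x i₀‖ ≤ 1 * q := by
          apply mul_le_mul (habs _ _ (hy i₀)) (hx i₀) (norm_nonneg _) zero_le_one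
      _ = q := one_mul q
  have hmain : ‖b - b'‖ ≤ 2 * q := by
    rw [hbb]
    calc ‖c' i₀ • x' i₀ - c i₀ • x i₀‖ ≤ ‖c' i₀ • x' i₀‖ + ‖c i₀ • x i₀‖ := norm_sub_le _ _
      _ ≤ q + q := add_le_add hnorm1 hnorm2
      _ = 2 * q := by ring
  exact ⟨hmain, le_trans (norm_sub_norm_le b b') hmain⟩
end

section
/- Let n ≥ 1, λ > 0, Δ ≥ 0 with λ + Δ > 0, c > 0, q > 0. Let H be a d×d real symmetric matrix with H − I positive semidefinite, let x_1,…,x_n, x'_n ∈ ℝ^d with ‖x_i‖ ≤ q and ‖x'_n‖ ≤ q, and let c_1,…,c_n, c'_n ∈ [0, c]. Define A = nλH + nΔI + Σ_{i=1}^n c_i x_i x_iᵀ and A' = nλH + nΔI + Σ_{i=1}^{n-1} c_i x_i x_iᵀ + c'_n x'_n x'_nᵀ. Then A and A' are positive definite and det(A') / det(A) ≤ (1 + c·q²/(n(λ+Δ)))². -/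
open Finset Matrix

namespace DetRatioAux

variable {d : ℕ}

lemma vecMulVec_mulVec' (v y : Fin d → ℝ) : vecMulVec v v *ᵥ y = (v ⬝ᵥ y) • v := by
  ext i
  simp only [mulVec, vecMulVec_apply, dotProduct, Pi.smul_apply, smul_eq_mul, Finset.sum_mul]
  exact Finset.sum_congr rfl fun j _ => by ring

lemma psd_smul_vecMulVec (c : ℝ) (hc : 0 ≤ c) (v : Fin d → ℝ) :
    ((c • vecMulVec v v : Matrix (Fin d) (Fin d) ℝ)).PosSemidef := by
  rw [posSemidef_iff_dotProduct_mulVec]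
  constructor
  · show _ᴴ = _
    ext i j
    simp [conjTranspose_apply, vecMulVec_apply, mul_comm]
  · intro y
    rw [star_trivial, smul_mulVec, vecMulVec_mulVec', dotProduct_smul, smul_eq_mul,
      dotProduct_smul, smul_eq_mul]
    have h : y ⬝ᵥ v = v ⬝ᵥ y := dotProduct_comm _ _
    rw [h]
    exact mul_nonneg hc (mul_self_nonneg _)

lemma psd_smul (c : ℝ) (hc : 0 ≤ c) {M : Matrix (Fin d) (Fin d) ℝ} (h : M.PosSemidef) :
    (c • M).PosSemidef := by
  rw [posSemidef_iff_dotProduct_mulVec]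
  constructor
  · show _ᴴ = _
    rw [conjTranspose_smul, h.1]
    simp
  · intro y
    rw [smul_mulVec, dotProduct_smul, smul_eq_mul]
    exact mul_nonneg hc (h.dotProduct_mulVec_nonneg y)

lemma posDef_of_sub {α : ℝ} (hα : 0 < α) {M : Matrix (Fin d) (Fin d) ℝ}
    (h : (M - α • 1).PosSemidef) : M.PosDef := by
  have hone : ((α • 1 : Matrix (Fin d) (Fin d) ℝ)).PosDef := by
    rw [smul_one_eq_diagonal]
    exact posDef_diagonal_iff.mpr fun _ => hα
  have : M = (M - α • 1) + α • 1 := by abel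
  rw [this]
  exact Matrix.PosDef.posSemidef_add h hone

lemma det_rank_one {B : Matrix (Fin d) (Fin d) ℝ} (hB : B.PosDef) (c : ℝ) (v : Fin d → ℝ) :
    (B + c • vecMulVec v v).det = B.det * (1 + c * (v ⬝ᵥ B⁻¹ *ᵥ v)) := by
  have h1 : (c • vecMulVec v v : Matrix (Fin d) (Fin d) ℝ)
      = replicateCol Unit (c • v) * replicateRow Unit v := by
    rw [← vecMulVec_eq]
    ext i j
    simp [vecMulVec_apply]
    ring
  rw [h1, det_add_replicateCol_mul_replicateRow hB.det_pos.ne'.isUnit]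
  congr 1
  rw [det_unique]
  simp only [Matrix.add_apply, one_apply_eq, mul_apply, replicateRow_apply, replicateCol_apply, dotProduct, mulVec,
    Pi.smul_apply, smul_eq_mul, Finset.mul_sum, Finset.sum_mul]
  rw [Finset.sum_comm]
  congr 1
  refine Finset.sum_congr rfl fun j _ => Finset.sum_congr rfl fun k _ => by ring

lemma quad_inv_bounds {α : ℝ} (hα : 0 < α) {B : Matrix (Fin d) (Fin d) ℝ}
    (hB : B.PosDef) (hBα : (B - α • 1).PosSemidef) (v : Fin d → ℝ) :
    0 ≤ v ⬝ᵥ B⁻¹ *ᵥ v ∧ v ⬝ᵥ B⁻¹ *ᵥ v ≤ (v ⬝ᵥ v) / α := by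
  set w := B⁻¹ *ᵥ v with hw
  have hBw : B *ᵥ w = v := by
    rw [hw, mulVec_mulVec, Matrix.mul_nonsing_inv _ hB.det_pos.ne'.isUnit, one_mulVec]
  have ht0 : 0 ≤ v ⬝ᵥ w := by
    have := hB.inv.posSemidef.dotProduct_mulVec_nonneg v
    rwa [star_trivial] at this
  have hww : 0 ≤ w ⬝ᵥ w := by
    simpa [dotProduct] using Finset.sum_nonneg fun i _ => mul_self_nonneg (w i)
  have hvv : 0 ≤ v ⬝ᵥ v := by
    simpa [dotProduct] using Finset.sum_nonneg fun i _ => mul_self_nonneg (v i)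
  have h1 : α * (w ⬝ᵥ w) ≤ v ⬝ᵥ w := by
    have := hBα.dotProduct_mulVec_nonneg w
    rw [star_trivial, sub_mulVec, dotProduct_sub, smul_mulVec, one_mulVec,
      dotProduct_smul, smul_eq_mul, sub_nonneg, hBw] at this
    rwa [dotProduct_comm w v] at this
  have hcs : (v ⬝ᵥ w) ^ 2 ≤ (v ⬝ᵥ v) * (w ⬝ᵥ w) := by
    have := Finset.sum_mul_sq_le_sq_mul_sq Finset.univ v w
    simpa [dotProduct, sq] using this
  refine ⟨ht0, ?_⟩
  rw [le_div_iff₀ hα]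
  rcases eq_or_lt_of_le ht0 with h | h
  · rw [← h, zero_mul]
    exact hvv
  · have key : (v ⬝ᵥ w) * α * (v ⬝ᵥ w) ≤ (v ⬝ᵥ v) * (v ⬝ᵥ w) := by
      calc (v ⬝ᵥ w) * α * (v ⬝ᵥ w) = α * (v ⬝ᵥ w) ^ 2 := by ring
        _ ≤ α * ((v ⬝ᵥ v) * (w ⬝ᵥ w)) := by nlinarith
        _ = (v ⬝ᵥ v) * (α * (w ⬝ᵥ w)) := by ring
        _ ≤ (v ⬝ᵥ v) * (v ⬝ᵥ w) := by nlinarith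
    exact le_of_mul_le_mul_right key h

lemma dot_self_eq (v : EuclideanSpace ℝ (Fin d)) : (v : Fin d → ℝ) ⬝ᵥ v = ‖v‖ ^ 2 := by
  rw [EuclideanSpace.norm_eq, Real.sq_sqrt (by positivity)]
  simp [dotProduct, sq]

end DetRatioAux
/-- Determinant ratio bound for the Hessians of perturbed regularized logistic-regression
objectives at a common minimizer, for two datasets differing in the `n`-th example. -/
theorem det_ratio_bound {d n : ℕ} (hn : 1 ≤ n)
    (lam Δ c q : ℝ) (hlam : 0 < lam) (hΔ : 0 ≤ Δ) (hlamΔ : 0 < lam + Δ)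
    (hc : 0 < c) (hq : 0 < q)
    (H : Matrix (Fin d) (Fin d) ℝ) (hH : H.IsSymm) (hH1 : (H - 1).PosSemidef)
    (x : Fin n → EuclideanSpace ℝ (Fin d)) (x' : EuclideanSpace ℝ (Fin d))
    (hx : ∀ i, ‖x i‖ ≤ q) (hx' : ‖x'‖ ≤ q)
    (cs : Fin n → ℝ) (c' : ℝ)
    (hcs : ∀ i, cs i ∈ Set.Icc (0 : ℝ) c) (hc' : c' ∈ Set.Icc (0 : ℝ) c)
    (i₀ : Fin n) (hi₀ : (i₀ : ℕ) = n - 1)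
    (A A' : Matrix (Fin d) (Fin d) ℝ)
    (hA : A = (n * lam) • H + (n * Δ) • (1 : Matrix (Fin d) (Fin d) ℝ)
        + ∑ i, cs i • Matrix.vecMulVec (x i) (x i))
    (hA' : A' = (n * lam) • H + (n * Δ) • (1 : Matrix (Fin d) (Fin d) ℝ)
        + ∑ i, (Function.update cs i₀ c') i •
            Matrix.vecMulVec ((Function.update x i₀ x') i) ((Function.update x i₀ x') i)) :
    A.PosDef ∧ A'.PosDef ∧ A'.det / A.det ≤ (1 + c * q ^ 2 / (n * (lam + Δ))) ^ 2 := by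
  classical
  have hn0 : (0 : ℝ) < n := by exact_mod_cast hn
  set α : ℝ := n * (lam + Δ) with hαdef
  have hα : 0 < α := mul_pos hn0 hlamΔ
  set M : Matrix (Fin d) (Fin d) ℝ :=
    (n * lam) • H + (n * Δ) • (1 : Matrix (Fin d) (Fin d) ℝ) with hMdef
  set f : Fin n → Matrix (Fin d) (Fin d) ℝ :=
    fun i => cs i • Matrix.vecMulVec (x i) (x i) with hfdef
  set B : Matrix (Fin d) (Fin d) ℝ := M + ∑ i ∈ Finset.univ.erase i₀, f i with hBdef
  have hMα : M - α • 1 = (n * lam) • (H - 1) := by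
    rw [hMdef, hαdef]
    module
  have hpsd_f : ∀ i, (f i).PosSemidef := fun i =>
    DetRatioAux.psd_smul_vecMulVec _ (hcs i).1 _
  have hpsd_sum : ∀ s : Finset (Fin n), (∑ i ∈ s, f i).PosSemidef := by
    intro s
    induction s using Finset.induction_on with
    | empty => simpa using Matrix.PosSemidef.zero
    | insert _ _ hmem ih => rw [Finset.sum_insert hmem]; exact (hpsd_f _).add ih
  have hBsub : (B - α • 1).PosSemidef := by
    have hBe : B - α • 1 = (n * lam) • (H - 1) + ∑ i ∈ Finset.univ.erase i₀, f i := by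
      rw [hBdef, ← hMα]; abel
    rw [hBe]
    exact (DetRatioAux.psd_smul _ (by positivity) hH1).add (hpsd_sum _)
  have hB : B.PosDef := DetRatioAux.posDef_of_sub hα hBsub
  have hAeq : A = B + cs i₀ • Matrix.vecMulVec (x i₀) (x i₀) := by
    rw [hA, hBdef, ← Finset.sum_erase_add Finset.univ f (Finset.mem_univ i₀), ← add_assoc]
  have hA'eq : A' = B + c' • Matrix.vecMulVec (x' : Fin d → ℝ) x' := by
    rw [hA', hBdef, ← Finset.sum_erase_add Finset.univ _ (Finset.mem_univ i₀), ← add_assoc]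
    congr 1
    · congr 1
      refine Finset.sum_congr rfl fun i hi => ?_
      have hne : i ≠ i₀ := Finset.ne_of_mem_erase hi
      rw [hfdef, Function.update_of_ne hne, Function.update_of_ne hne]
    · rw [Function.update_self, Function.update_self]
  obtain ⟨hs₀0, hs₀le⟩ := DetRatioAux.quad_inv_bounds hα hB hBsub (x i₀ : Fin d → ℝ)
  obtain ⟨hs'0, hs'le⟩ := DetRatioAux.quad_inv_bounds hα hB hBsub (x' : Fin d → ℝ)
  have hdetA : A.det = B.det * (1 + cs i₀ * ((x i₀ : Fin d → ℝ) ⬝ᵥ B⁻¹ *ᵥ (x i₀))) := by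
    rw [hAeq]; exact DetRatioAux.det_rank_one hB _ _
  have hdetA' : A'.det = B.det * (1 + c' * ((x' : Fin d → ℝ) ⬝ᵥ B⁻¹ *ᵥ x')) := by
    rw [hA'eq]; exact DetRatioAux.det_rank_one hB _ _
  have hApos : A.PosDef := by
    rw [hAeq]
    exact hB.add_posSemidef (DetRatioAux.psd_smul_vecMulVec _ (hcs i₀).1 _)
  have hA'pos : A'.PosDef := by
    rw [hA'eq]
    exact hB.add_posSemidef (DetRatioAux.psd_smul_vecMulVec _ hc'.1 _)
  refine ⟨hApos, hA'pos, ?_⟩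
  have hBdet : 0 < B.det := hB.det_pos
  have hAdet : 0 < A.det := hApos.det_pos
  have hx'q : (x' : Fin d → ℝ) ⬝ᵥ x' ≤ q ^ 2 := by
    rw [DetRatioAux.dot_self_eq]
    exact pow_le_pow_left₀ (norm_nonneg _) hx' 2
  have hs'q : (x' : Fin d → ℝ) ⬝ᵥ B⁻¹ *ᵥ x' ≤ q ^ 2 / α := by
    refine le_trans hs'le ?_
    gcongr
  have h1 : (1 : ℝ) ≤ 1 + cs i₀ * ((x i₀ : Fin d → ℝ) ⬝ᵥ B⁻¹ *ᵥ (x i₀)) := by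
    have := mul_nonneg (hcs i₀).1 hs₀0
    linarith
  have ht : 0 ≤ c * q ^ 2 / α := by positivity
  have e1 : 1 + c' * ((x' : Fin d → ℝ) ⬝ᵥ B⁻¹ *ᵥ x') ≤ 1 + c * q ^ 2 / α := by
    have h2 : c' * ((x' : Fin d → ℝ) ⬝ᵥ B⁻¹ *ᵥ x') ≤ c * (q ^ 2 / α) :=
      mul_le_mul hc'.2 hs'q hs'0 hc.le
    rw [mul_div_assoc]
    linarith
  have hBA : B.det ≤ A.det := by rw [hdetA]; exact le_mul_of_one_le_right hBdet.le h1
  have hkey : A'.det ≤ (1 + c * q ^ 2 / α) * A.det := by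
    calc A'.det = B.det * (1 + c' * ((x' : Fin d → ℝ) ⬝ᵥ B⁻¹ *ᵥ x')) := hdetA'
      _ ≤ B.det * (1 + c * q ^ 2 / α) := mul_le_mul_of_nonneg_left e1 hBdet.le
      _ ≤ A.det * (1 + c * q ^ 2 / α) := mul_le_mul_of_nonneg_right hBA (by linarith)
      _ = (1 + c * q ^ 2 / α) * A.det := mul_comm _ _
  have hfin : A'.det / A.det ≤ 1 + c * q ^ 2 / α := by
    rw [div_le_iff₀ hAdet]
    exact hkey
  calc A'.det / A.det ≤ 1 + c * q ^ 2 / α := hfin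
    _ ≤ (1 + c * q ^ 2 / α) ^ 2 := by nlinarith [ht, sq_nonneg (c * q ^ 2 / α)]
end
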